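/- Let B be a real vector space with a symmetric bilinear form ⌊·,·⌋, and set q(b) := (1/2)⌊b,b⌋. Let f : B → ℝ ∪ {∞} be a proper convex function with f ≥ q on B. Then for all b, c ∈ B, −q(b − c) ≤ (√((f−q)(b)) + √((f−q)(c)))², whenever (f−q)(b) and (f−q)(c) are finite. -/

import Mathlib

private lemma key_real (K a β : ℝ) (hα : 0 ≤ a) (hβ : 0 ≤ β)
    (h : ∀ t : ℝ, 0 ≤ t → t ≤ 1 → K * (t * (1 - t)) ≤ t * a + (1 - t) * β) :
    K ≤ (Real.sqrt a + Real.sqrt β) ^ 2 := by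
  by_contra hlt
  push_neg at hlt
  set sa := Real.sqrt a with hsa
  set sb := Real.sqrt β with hsb
  have hsa2 : sa ^ 2 = a := Real.sq_sqrt hα
  have hsb2 : sb ^ 2 = β := Real.sq_sqrt hβ
  have hsa0 : 0 ≤ sa := Real.sqrt_nonneg _
  have hsb0 : 0 ≤ sb := Real.sqrt_nonneg _
  have hKpos : 0 < K := lt_of_le_of_lt (by positivity) hlt
  rcases lt_or_eq_of_le (mul_nonneg hsa0 hsb0) with hpos | hzero
  · -- both positive
    have hs : 0 < sa + sb := by nlinarith
    have ht0 : 0 ≤ sb / (sa + sb) := by positivity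
    have ht1 : sb / (sa + sb) ≤ 1 := by
      rw [div_le_one hs]; linarith [hsa0]
    have := h _ ht0 ht1
    have h1mt : 1 - sb / (sa + sb) = sa / (sa + sb) := by field_simp; ring
    rw [h1mt] at this
    have hexp : sb / (sa + sb) * (sa / (sa + sb)) = sa * sb / (sa + sb) ^ 2 := by
      field_simp
    have hrhs : sb / (sa + sb) * a + sa / (sa + sb) * β = sa * sb := by
      rw [← hsa2, ← hsb2]; field_simp
    rw [hexp, hrhs] at this
    have : K * (sa * sb) ≤ sa * sb * (sa + sb) ^ 2 := by
      rw [mul_div_assoc] at this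
      have h2 : (0:ℝ) < (sa + sb) ^ 2 := by positivity
      calc K * (sa * sb) = K * (sa * sb / (sa + sb) ^ 2) * (sa + sb) ^ 2 := by
            field_simp
        _ ≤ sa * sb * (sa + sb) ^ 2 := by
            rw [mul_div_assoc]
            exact mul_le_mul_of_nonneg_right this (le_of_lt h2)
    nlinarith
  · -- sa * sb = 0
    rcases mul_eq_zero.mp hzero.symm with h0 | h0
    · -- sa = 0, so a = 0; need K ≤ β
      have ha0 : a = 0 := by rw [← hsa2, h0]; ring
      have hKβ : β < K := by nlinarith
      set t : ℝ := (1 + β / K) / 2 with htdef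
      have hβK : β / K < 1 := (div_lt_one hKpos).mpr hKβ
      have hβK0 : 0 ≤ β / K := by positivity
      have ht0 : 0 ≤ t := by rw [htdef]; linarith
      have ht1 : t ≤ 1 := by rw [htdef]; linarith
      have := h t ht0 ht1
      rw [ha0] at this
      have h1mt : 1 - t = (1 - β / K) / 2 := by rw [htdef]; ring
      have htpos : 0 < t := by rw [htdef]; linarith
      -- K * t * (1-t) ≤ (1-t) * β, with 1-t > 0 gives K * t ≤ β? No: divide by (1-t)
      have h1mtpos : 0 < 1 - t := by rw [h1mt]; linarith
      have : K * t ≤ β := by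
        have := this
        rw [mul_comm t (1 - t)] at this
        have h2 : K * ((1 - t) * t) ≤ (1 - t) * β := by linarith [this]
        have := (mul_le_mul_iff_right₀ h1mtpos).mp (by linarith [h2] : (1 - t) * (K * t) ≤ (1 - t) * β)
        exact this
      have hKbK : β / K < t := by rw [htdef]; linarith
      have : K * (β / K) < K * t := (mul_lt_mul_iff_right₀ hKpos).mpr hKbK
      rw [mul_div_cancel₀ _ (ne_of_gt hKpos)] at this
      linarith
    · -- sb = 0, so β = 0; need K ≤ a
      have hb0 : β = 0 := by rw [← hsb2, h0]; ring
      have hKa : a < K := by nlinarith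
      set t : ℝ := (1 - a / K) / 2 with htdef
      have haK : a / K < 1 := (div_lt_one hKpos).mpr hKa
      have haK0 : 0 ≤ a / K := by positivity
      have ht0 : 0 ≤ t := by rw [htdef]; linarith
      have ht1 : t ≤ 1 := by rw [htdef]; linarith
      have hkey := h t ht0 ht1
      rw [hb0] at hkey
      have htpos : 0 < t := by rw [htdef]; linarith
      have hK1mt : K * (1 - t) ≤ a := by
        have h2 : t * (K * (1 - t)) ≤ t * a := by nlinarith
        exact (mul_le_mul_iff_right₀ htpos).mp h2
      have h1mt : a / K < 1 - t := by rw [htdef]; linarith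
      have : K * (a / K) < K * (1 - t) := (mul_lt_mul_iff_right₀ hKpos).mpr h1mt
      rw [mul_div_cancel₀ _ (ne_of_gt hKpos)] at this
      linarith

theorem stmt_0 (B : Type*) [AddCommGroup B] [Module ℝ B] (hB : ∃ b : B, b ≠ 0)
    (br : B →ₗ[ℝ] B →ₗ[ℝ] ℝ) (hsym : ∀ b c, br b c = br c b)
    (q : B → ℝ) (hq : ∀ b, q b = br b b / 2)
    (f : B → EReal) (hproper : ∃ b, f b ≠ ⊤) (hreal : ∀ b, f b ≠ ⊥)
    (hconv : ∀ x y : B, ∀ t : ℝ, 0 ≤ t → t ≤ 1 →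
      f (t • x + (1 - t) • y) ≤ (t : EReal) * f x + ((1 - t : ℝ) : EReal) * f y)
    (hfq : ∀ b, (q b : EReal) ≤ f b)
    (b c : B) (rb rc : ℝ) (hfb : f b = (rb : EReal)) (hfc : f c = (rc : EReal)) :
    -q (b - c) ≤ (Real.sqrt (rb - q b) + Real.sqrt (rc - q c)) ^ 2 := by
  have hqb : q b ≤ rb := by
    have := hfq b; rw [hfb] at this; exact_mod_cast this
  have hqc : q c ≤ rc := by
    have := hfq c; rw [hfc] at this; exact_mod_cast this
  apply key_real _ _ _ (by linarith) (by linarith)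
  intro t ht0 ht1
  -- key convexity inequality in ℝ
  have h1 : q (t • b + (1 - t) • c) ≤ t * rb + (1 - t) * rc := by
    have h2 := hconv b c t ht0 ht1
    rw [hfb, hfc] at h2
    have h3 : (q (t • b + (1 - t) • c) : EReal) ≤ ((t * rb + (1 - t) * rc : ℝ) : EReal) := by
      refine le_trans (hfq _) (le_trans h2 ?_)
      push_cast
      rfl
    exact_mod_cast h3
  -- expand q at the convex combination and at b - c
  have hbc : br b c = br c b := hsym b c
  have e1 : q (t • b + (1 - t) • c) = (t * t * br b b + t * (1 - t) * br b c
      + (1 - t) * t * br c b + (1 - t) * (1 - t) * br c c) / 2 := by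
    rw [hq]
    simp only [map_add, map_smul, LinearMap.add_apply, LinearMap.smul_apply, smul_eq_mul]
    ring
  have e2 : q (b - c) = (br b b - br b c - br c b + br c c) / 2 := by
    rw [hq]
    simp only [map_sub, LinearMap.sub_apply]
    ring
  rw [e1] at h1
  rw [e2, hq b, hq c]
  nlinarith [h1, hbc]
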